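/- (Inductive step for Theorem 1.) Fix an integer N ≥ 1 and real coefficients c_1, …, c_N. Suppose that for all real x and t with 1 - 2tx + t² > 0 and x ≠ t one has (2N-1)!! · F(t,x)^{2N+1} = Σ_{i=1}^{N} c_i · F^{(i)}(t,x)/(x-t)^{2N-i}. Then for all such x and t, (2N+1)!! · F(t,x)^{2N+3} = (2N-1)c_1 · F^{(1)}(t,x)/(x-t)^{2N+1} + Σ_{i=2}^{N} [(2N-i)c_i + c_{i-1}] · F^{(i)}(t,x)/(x-t)^{2N+2-i} + c_N · F^{(N+1)}(t,x)/(x-t)^{N+1}. -/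

import Mathlib

private lemma my_iteratedDerivWithin_of_isOpen {f : ℝ → ℝ} {s : Set ℝ} {t : ℝ} (n : ℕ)
    (hs : IsOpen s) (ht : t ∈ s) : iteratedDerivWithin n f s t = iteratedDeriv n f t := by
  simp only [iteratedDerivWithin, iteratedDeriv, iteratedFDerivWithin_of_isOpen n hs ht]

private lemma my_diffAt_iteratedDeriv {f : ℝ → ℝ} {U : Set ℝ} (hU : IsOpen U)
    (hf : ContDiffOn ℝ ⊤ f U) {t : ℝ} (ht : t ∈ U) (n : ℕ) :
    DifferentiableAt ℝ (iteratedDeriv n f) t := by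
  have h1 : DifferentiableOn ℝ (iteratedDerivWithin n f U) U :=
    hf.differentiableOn_iteratedDerivWithin
      (by exact_mod_cast WithTop.coe_lt_top (n : ℕ∞)) hU.uniqueDiffOn
  have h2 : DifferentiableAt ℝ (iteratedDerivWithin n f U) t :=
    (h1 t ht).differentiableAt (hU.mem_nhds ht)
  exact h2.congr_of_eventuallyEq <|
    Filter.eventuallyEq_of_mem (hU.mem_nhds ht) fun s hs =>
      (my_iteratedDerivWithin_of_isOpen n hU hs).symm

theorem legendre_genFun_nonlinear_ODE_step (N : ℕ) (hN : 1 ≤ N) (c : ℕ → ℝ)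
    (hyp : ∀ x t : ℝ, 1 - 2 * t * x + t ^ 2 > 0 → x ≠ t →
      (Nat.doubleFactorial (2 * N - 1) : ℝ)
          * ((1 - 2 * t * x + t ^ 2) ^ (-(1 : ℝ) / 2)) ^ (2 * N + 1)
        = ∑ i ∈ Finset.Icc 1 N, c i
            * iteratedDeriv i (fun s : ℝ => (1 - 2 * s * x + s ^ 2) ^ (-(1 : ℝ) / 2)) t
            / (x - t) ^ (2 * N - i)) :
    ∀ x t : ℝ, 1 - 2 * t * x + t ^ 2 > 0 → x ≠ t →
      (Nat.doubleFactorial (2 * N + 1) : ℝ)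
          * ((1 - 2 * t * x + t ^ 2) ^ (-(1 : ℝ) / 2)) ^ (2 * N + 3)
        = (2 * N - 1 : ℝ) * c 1
              * iteratedDeriv 1 (fun s : ℝ => (1 - 2 * s * x + s ^ 2) ^ (-(1 : ℝ) / 2)) t
              / (x - t) ^ (2 * N + 1)
          + ∑ i ∈ Finset.Icc 2 N, ((2 * N - i : ℝ) * c i + c (i - 1))
              * iteratedDeriv i (fun s : ℝ => (1 - 2 * s * x + s ^ 2) ^ (-(1 : ℝ) / 2)) t
              / (x - t) ^ (2 * N + 2 - i)
          + c N * iteratedDeriv (N + 1) (fun s : ℝ => (1 - 2 * s * x + s ^ 2) ^ (-(1 : ℝ) / 2)) t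
              / (x - t) ^ (N + 1) := by
  intro x t hpos hxt
  have hxt0 : x - t ≠ 0 := sub_ne_zero.2 hxt
  set f : ℝ → ℝ := fun s : ℝ => (1 - 2 * s * x + s ^ 2) ^ (-(1 : ℝ) / 2) with hfdef
  set U : Set ℝ := {s : ℝ | 0 < 1 - 2 * s * x + s ^ 2} ∩ {s : ℝ | s ≠ x} with hUdef
  have hUopen : IsOpen U := by
    apply IsOpen.inter
    · exact isOpen_lt continuous_const (by fun_prop)
    · exact isOpen_ne
  have htU : t ∈ U := ⟨hpos, fun h => hxt h.symm⟩
  have hg0 : ContDiff ℝ ⊤ (fun s : ℝ => 1 - 2 * s * x + s ^ 2) := by fun_prop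
  have hcd : ContDiffOn ℝ ⊤ f U := by
    intro s hs
    exact (ContDiffAt.rpow_const_of_ne hg0.contDiffAt (ne_of_gt hs.1)).contDiffWithinAt
  have hGd : ∀ i : ℕ, HasDerivAt (iteratedDeriv i f) (iteratedDeriv (i + 1) f t) t := by
    intro i
    have hd := (my_diffAt_iteratedDeriv hUopen hcd htU i).hasDerivAt
    rwa [show iteratedDeriv (i + 1) f t = deriv (iteratedDeriv i f) t by
      rw [iteratedDeriv_succ]]
  have hFd : HasDerivAt f ((x - t) * f t ^ 3) t := by
    have hg : HasDerivAt (fun u : ℝ => 1 - 2 * u * x + u ^ 2) (-(2 * x) + 2 * t) t := by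
      have h1 : HasDerivAt (fun u : ℝ => 2 * u * x) (2 * x) t := by
        simpa using (((hasDerivAt_id t).const_mul 2).mul_const x)
      simpa using ((h1.const_sub 1).fun_add ((hasDerivAt_pow 2 t)))
    have h := hg.rpow_const (p := -(1 : ℝ) / 2) (Or.inl (ne_of_gt hpos))
    convert h using 1
    have h3 : f t ^ 3 = (1 - 2 * t * x + t ^ 2) ^ (-(3 : ℝ) / 2) := by
      rw [hfdef]
      rw [← Real.rpow_natCast _ 3, ← Real.rpow_mul hpos.le]; norm_num
    rw [h3, show (-(1 : ℝ) / 2 - 1) = -(3 : ℝ) / 2 by norm_num]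
    ring
  -- the two sides of the hypothesis as functions of t
  have hEq : Set.EqOn
      (fun s => ((2 * N - 1).doubleFactorial : ℝ) * f s ^ (2 * N + 1))
      (fun s => ∑ i ∈ Finset.Icc 1 N,
        c i * iteratedDeriv i f s / (x - s) ^ (2 * N - i)) U := by
    intro s hs
    exact hyp x s hs.1 (Ne.symm hs.2)
  -- derivative of the left side
  have hL : HasDerivAt
      (fun s => ((2 * N - 1).doubleFactorial : ℝ) * f s ^ (2 * N + 1))
      (((2 * N - 1).doubleFactorial : ℝ)
        * (((2 * N + 1 : ℕ) : ℝ) * f t ^ (2 * N) * ((x - t) * f t ^ 3))) t := by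
    have h := (hFd.fun_pow (2 * N + 1)).const_mul ((2 * N - 1).doubleFactorial : ℝ)
    refine h.congr_deriv ?_
    rw [Nat.add_sub_cancel]
  -- derivative of each term of the right side
  have hterm : ∀ i ∈ Finset.Icc 1 N,
      HasDerivAt (fun s => c i * iteratedDeriv i f s / (x - s) ^ (2 * N - i))
        (c i * iteratedDeriv (i + 1) f t / (x - t) ^ (2 * N - i)
          + ((2 * N - i : ℕ) : ℝ) * (c i * iteratedDeriv i f t)
              / (x - t) ^ (2 * N - i + 1)) t := by
    intro i hi
    rw [Finset.mem_Icc] at hi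
    obtain ⟨m, hm⟩ : ∃ m, 2 * N - i = m + 1 := ⟨2 * N - i - 1, by omega⟩
    rw [hm]
    have h1 : HasDerivAt (fun s : ℝ => x - s) (-1) t := by
      simpa using (hasDerivAt_id t).const_sub x
    have hden : HasDerivAt (fun s : ℝ => (x - s) ^ (m + 1))
        (-((m + 1 : ℝ) * (x - t) ^ m)) t := by
      simpa using h1.fun_pow (m + 1)
    have h := (((hGd i).const_mul (c i)).div hden (pow_ne_zero _ hxt0))
    refine h.congr_deriv ?_
    push_cast
    field_simp
    ring
  have hR : HasDerivAt
      (fun s => ∑ i ∈ Finset.Icc 1 N,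
        c i * iteratedDeriv i f s / (x - s) ^ (2 * N - i))
      (∑ i ∈ Finset.Icc 1 N,
        (c i * iteratedDeriv (i + 1) f t / (x - t) ^ (2 * N - i)
          + ((2 * N - i : ℕ) : ℝ) * (c i * iteratedDeriv i f t)
              / (x - t) ^ (2 * N - i + 1))) t :=
    HasDerivAt.fun_sum hterm
  have hkey := hL.deriv.symm.trans
    ((Filter.EventuallyEq.deriv_eq
      (Filter.eventuallyEq_of_mem (hUopen.mem_nhds htU) hEq)).trans hR.deriv)
  -- cancellation lemma
  have hcancel : ∀ (A : ℝ) (k : ℕ), (x - t) * (A / (x - t) ^ (k + 1)) = A / (x - t) ^ k := by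
    intro A k
    field_simp
    ring
  -- the common normal form
  set D : ℝ := ((2 * N - 1).doubleFactorial : ℝ) with hDdef
  apply mul_left_cancel₀ hxt0
  have hcast1 : ((2 * N - 1 : ℕ) : ℝ) = 2 * (N : ℝ) - 1 := by
    rw [Nat.cast_sub (by omega)]; push_cast; ring
  calc (x - t) * (((2 * N + 1).doubleFactorial : ℝ) * f t ^ (2 * N + 3))
      = D * (((2 * N + 1 : ℕ) : ℝ) * f t ^ (2 * N) * ((x - t) * f t ^ 3)) := by
        rw [show 2 * N + 1 = (2 * N - 1) + 2 by omega, Nat.doubleFactorial_add_two,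
          show 2 * N - 1 + 2 = 2 * N + 1 by omega]
        push_cast
        ring
    _ = ∑ i ∈ Finset.Icc 1 N,
        (c i * iteratedDeriv (i + 1) f t / (x - t) ^ (2 * N - i)
          + ((2 * N - i : ℕ) : ℝ) * (c i * iteratedDeriv i f t)
              / (x - t) ^ (2 * N - i + 1)) := hkey
    _ = (2 * (N : ℝ) - 1) * c 1 * iteratedDeriv 1 f t / (x - t) ^ (2 * N)
        + ∑ i ∈ Finset.Icc 2 N, ((2 * (N : ℝ) - (i : ℝ)) * c i + c (i - 1))
            * iteratedDeriv i f t / (x - t) ^ (2 * N + 1 - i)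
        + c N * iteratedDeriv (N + 1) f t / (x - t) ^ N := by
        rw [Finset.sum_add_distrib]
        -- first sum : reindex
        have hA : ∑ i ∈ Finset.Icc 1 N,
            c i * iteratedDeriv (i + 1) f t / (x - t) ^ (2 * N - i)
            = ∑ j ∈ Finset.Icc 2 N,
                c (j - 1) * iteratedDeriv j f t / (x - t) ^ (2 * N + 1 - j)
              + c N * iteratedDeriv (N + 1) f t / (x - t) ^ N := by
          have e1 : Finset.Icc 2 (N + 1)
              = Finset.map (addRightEmbedding 1) (Finset.Icc 1 N) := by
            rw [Finset.map_add_right_Icc]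
          have e2 : ∑ j ∈ Finset.Icc 2 (N + 1),
              c (j - 1) * iteratedDeriv j f t / (x - t) ^ (2 * N + 1 - j)
              = ∑ i ∈ Finset.Icc 1 N,
                c i * iteratedDeriv (i + 1) f t / (x - t) ^ (2 * N - i) := by
            rw [e1, Finset.sum_map]
            apply Finset.sum_congr rfl
            intro i hi
            rw [Finset.mem_Icc] at hi
            simp only [addRightEmbedding_apply]
            rw [show i + 1 - 1 = i by omega, show 2 * N + 1 - (i + 1) = 2 * N - i by omega]
          rw [← e2, Finset.sum_Icc_succ_top (by omega : 2 ≤ N + 1),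
            show 2 * N + 1 - (N + 1) = N by omega, show N + 1 - 1 = N by omega]
        -- second sum : split off i = 1
        have hB : ∑ i ∈ Finset.Icc 1 N,
            ((2 * N - i : ℕ) : ℝ) * (c i * iteratedDeriv i f t)
              / (x - t) ^ (2 * N - i + 1)
            = (2 * (N : ℝ) - 1) * c 1 * iteratedDeriv 1 f t / (x - t) ^ (2 * N)
              + ∑ i ∈ Finset.Icc 2 N,
                  ((2 * N - i : ℕ) : ℝ) * (c i * iteratedDeriv i f t)
                    / (x - t) ^ (2 * N - i + 1) := by
          rw [show Finset.Icc 1 N = insert 1 (Finset.Icc 2 N) by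
              ext j; simp only [Finset.mem_Icc, Finset.mem_insert]; omega,
            Finset.sum_insert (by simp)]
          congr 1
          rw [show 2 * N - 1 + 1 = 2 * N by omega, hcast1]
          ring
        rw [hA, hB]
        have hC : ∑ j ∈ Finset.Icc 2 N,
            c (j - 1) * iteratedDeriv j f t / (x - t) ^ (2 * N + 1 - j)
            + ∑ i ∈ Finset.Icc 2 N,
                ((2 * N - i : ℕ) : ℝ) * (c i * iteratedDeriv i f t)
                  / (x - t) ^ (2 * N - i + 1)
            = ∑ i ∈ Finset.Icc 2 N, ((2 * (N : ℝ) - (i : ℝ)) * c i + c (i - 1))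
                * iteratedDeriv i f t / (x - t) ^ (2 * N + 1 - i) := by
          rw [← Finset.sum_add_distrib]
          apply Finset.sum_congr rfl
          intro i hi
          rw [Finset.mem_Icc] at hi
          rw [show 2 * N - i + 1 = 2 * N + 1 - i by omega,
            Nat.cast_sub (by omega : i ≤ 2 * N)]
          push_cast
          ring
        rw [← hC]
        ring
    _ = (x - t) * ((2 * ↑N - 1) * c 1 * iteratedDeriv 1 f t / (x - t) ^ (2 * N + 1)
        + ∑ i ∈ Finset.Icc 2 N, ((2 * ↑N - ↑i) * c i + c (i - 1))
            * iteratedDeriv i f t / (x - t) ^ (2 * N + 2 - i)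
        + c N * iteratedDeriv (N + 1) f t / (x - t) ^ (N + 1)) := by
        rw [mul_add, mul_add, hcancel _ (2 * N), hcancel _ N, Finset.mul_sum]
        congr 1
        congr 1
        apply Finset.sum_congr rfl
        intro i hi
        rw [Finset.mem_Icc] at hi
        rw [show 2 * N + 2 - i = (2 * N + 1 - i) + 1 by omega, hcancel]
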